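/- Let α > 0 and B > 0, and define F(x) = [1 − exp(−Bx)]^{1/α} for x ∈ (0, +∞) (an exponentiated exponential distribution). Then F is the cumulative distribution function of a positive absolutely continuous random variable (continuous, nondecreasing, with lim_{x→0⁺} F(x) = 0 and lim_{x→+∞} F(x) = 1), F is differentiable on (0, +∞) with derivative f, and its α-generalized reversed aging intensity function is L̆_α(x) = Bx for all x > 0. Moreover, F is the unique such cumulative distribution function with α-generalized reversed aging intensity equal to Bx. -/

import Mathlib

/-- The α-generalized reversed aging intensity function. -/
noncomputable def genRAI (F f : ℝ → ℝ) (α x : ℝ) : ℝ :=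
  if α = 0 then -(x * f x) / (F x * Real.log (F x))
  else α * x * F x ^ (α - 1) * f x / (1 - F x ^ α)

/-- The exponentiated exponential cdf `F(x) = [1 - exp(-Bx)]^(1/α)`. -/
noncomputable def Fee (α B : ℝ) (x : ℝ) : ℝ :=
  (1 - Real.exp (-(B * x))) ^ (1/α)

lemma hu_deriv (B x : ℝ) :
    HasDerivAt (fun y => 1 - Real.exp (-(B * y))) (B * Real.exp (-(B * x))) x := by
  have h1 : HasDerivAt (fun y : ℝ => -(B * y)) (-B) x := by
    exact (((hasDerivAt_id x).const_mul B).neg).congr_deriv (by ring)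
  have h2 := (Real.hasDerivAt_exp (-(B * x))).comp x h1
  have h3 := h2.const_sub 1
  refine h3.congr_deriv ?_
  ring

lemma t_pos {B x : ℝ} (hB : 0 < B) (hx : 0 < x) : 0 < 1 - Real.exp (-(B * x)) := by
  have : Real.exp (-(B * x)) < 1 := by
    rw [Real.exp_lt_one_iff]
    nlinarith
  linarith

/-- For `α > 0` and `B > 0`, the exponentiated exponential cdf
`F(x) = [1 - exp(-Bx)]^(1/α)` is the cdf of a positive absolutely continuous random
variable (continuous, nondecreasing, with limits `0` at `0⁺` and `1` at `+∞`), it is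
differentiable on `(0,∞)` with derivative `f`, its α-generalized reversed aging
intensity is `L̆_α(x) = Bx` for all `x > 0`; moreover it is the unique such cdf with
α-generalized reversed aging intensity equal to `Bx`. -/
theorem stmt_15 (α B : ℝ) (hα : 0 < α) (hB : 0 < B) :
    ContinuousOn (Fee α B) (Set.Ioi 0) ∧
    MonotoneOn (Fee α B) (Set.Ioi 0) ∧
    Filter.Tendsto (Fee α B) (nhdsWithin (0:ℝ) (Set.Ioi 0)) (nhds 0) ∧
    Filter.Tendsto (Fee α B) Filter.atTop (nhds 1) ∧
    (∃ f : ℝ → ℝ, (∀ x > (0:ℝ), HasDerivAt (Fee α B) (f x) x) ∧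
      ∀ x > (0:ℝ), genRAI (Fee α B) f α x = B * x) ∧
    (∀ G g : ℝ → ℝ, Monotone G →
      (∀ x ∈ Set.Ioi (0:ℝ), HasDerivAt G (g x) x) →
      (∀ x ∈ Set.Ioi (0:ℝ), 0 < G x ∧ G x < 1) →
      (∀ u v : ℝ, 0 < u → 0 < v → IntervalIntegrable g MeasureTheory.volume u v) →
      Filter.Tendsto G (nhdsWithin (0:ℝ) (Set.Ioi 0)) (nhds 0) →
      (∀ x > (0:ℝ), genRAI G g α x = B * x) →
      ∀ x > (0:ℝ), G x = Fee α B x) := by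
  have hαne : α ≠ 0 := hα.ne'
  set f : ℝ → ℝ := fun x =>
    B * Real.exp (-(B * x)) * (1/α) * (1 - Real.exp (-(B * x))) ^ (1/α - 1) with hf
  -- derivative
  have hFder : ∀ x > (0:ℝ), HasDerivAt (Fee α B) (f x) x := by
    intro x hx
    have ht := t_pos hB hx
    have h := (hu_deriv B x).rpow_const (p := 1/α) (Or.inl ht.ne')
    have h2 : HasDerivAt (fun y => (1 - Real.exp (-(B * y))) ^ (1/α)) (f x) x := by
      simpa [hf, mul_assoc] using h
    exact h2
  have hfpos : ∀ x > (0:ℝ), 0 < f x := by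
    intro x hx
    have ht := t_pos hB hx
    have := Real.rpow_pos_of_pos ht (1/α - 1)
    have he := Real.exp_pos (-(B * x))
    have h1α : 0 < 1/α := by positivity
    positivity
  have hcont : ContinuousOn (Fee α B) (Set.Ioi 0) := fun x hx =>
    ((hFder x hx).continuousAt).continuousWithinAt
  refine ⟨hcont, ?_, ?_, ?_, ?_, ?_⟩
  · -- monotone
    have hs : StrictMonoOn (Fee α B) (Set.Ioi 0) := by
      apply strictMonoOn_of_deriv_pos (convex_Ioi 0) hcont
      intro x hx
      rw [interior_Ioi] at hx
      rw [(hFder x hx).deriv]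
      exact hfpos x hx
    exact hs.monotoneOn
  · -- limit at 0+
    have h1 : Filter.Tendsto (fun y => 1 - Real.exp (-(B * y)))
        (nhdsWithin (0:ℝ) (Set.Ioi 0)) (nhds 0) := by
      have : Continuous (fun y : ℝ => 1 - Real.exp (-(B * y))) := by continuity
      have h := this.tendsto 0
      simp only [mul_zero, neg_zero, Real.exp_zero, sub_self] at h
      exact h.mono_left nhdsWithin_le_nhds
    have h2 : ContinuousAt (fun t : ℝ => t ^ (1/α)) 0 :=
      Real.continuousAt_rpow_const 0 (1/α) (Or.inr (by positivity))
    have h3 : Filter.Tendsto (fun y => (1 - Real.exp (-(B * y))) ^ (1/α))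
        (nhdsWithin (0:ℝ) (Set.Ioi 0)) (nhds 0) := by
      have := h2.tendsto.comp h1
      simpa [Function.comp_def, Real.zero_rpow (inv_ne_zero hαne), one_div] using this
    exact h3
  · -- limit at +∞
    have h1 : Filter.Tendsto (fun y => 1 - Real.exp (-(B * y))) Filter.atTop (nhds 1) := by
      have hb : Filter.Tendsto (fun y : ℝ => -(B * y)) Filter.atTop Filter.atBot := by
        apply Filter.tendsto_neg_atTop_atBot.comp
        exact Filter.Tendsto.const_mul_atTop hB Filter.tendsto_id
      have := Real.tendsto_exp_atBot.comp hb
      have h := this.const_sub 1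
      simpa using h
    have h2 : ContinuousAt (fun t : ℝ => t ^ (1/α)) 1 :=
      Real.continuousAt_rpow_const 1 (1/α) (Or.inl one_ne_zero)
    have h3 : Filter.Tendsto (fun y => (1 - Real.exp (-(B * y))) ^ (1/α))
        Filter.atTop (nhds 1) := by
      have := h2.tendsto.comp h1
      simpa [Function.comp_def, Real.one_rpow] using this
    exact h3
  · -- genRAI value
    refine ⟨f, hFder, ?_⟩
    intro x hx
    have ht := t_pos hB hx
    set t := 1 - Real.exp (-(B * x)) with htdef
    have hFα : Fee α B x ^ α = t := by
      rw [Fee, ← htdef, ← Real.rpow_mul ht.le, one_div_mul_cancel hαne, Real.rpow_one]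
    have hF1 : Fee α B x ^ (α - 1) * t ^ (1/α - 1) = 1 := by
      rw [Fee, ← Real.rpow_mul ht.le, ← Real.rpow_add ht]
      rw [show 1/α * (α - 1) + (1/α - 1) = 0 by field_simp; ring]
      exact Real.rpow_zero t
    have he : Real.exp (-(B * x)) ≠ 0 := (Real.exp_pos _).ne'
    rw [genRAI, if_neg hαne, hFα]
    have key : α * x * Fee α B x ^ (α - 1) * f x = B * x * Real.exp (-(B * x)) := by
      rw [hf]
      have : α * x * Fee α B x ^ (α - 1) *
          (B * Real.exp (-(B * x)) * (1/α) * (1 - Real.exp (-(B * x))) ^ (1/α - 1))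
          = (Fee α B x ^ (α - 1) * t ^ (1/α - 1)) * (B * x * Real.exp (-(B * x))) * (α * (1/α)) := by
        rw [← htdef]; ring
      rw [this, hF1, mul_one_div_cancel hαne, one_mul, mul_one]
    rw [key, htdef]
    rw [show (1 : ℝ) - (1 - Real.exp (-(B * x))) = Real.exp (-(B * x)) by ring]
    field_simp
  · -- uniqueness
    intro G g _hmono hGder hG01 _hint hG0 hRAI
    set H : ℝ → ℝ := fun y => Real.log (1 - G y ^ α) + B * y with hH
    have hden : ∀ x ∈ Set.Ioi (0:ℝ), 0 < 1 - G x ^ α := by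
      intro x hx
      have h := hG01 x hx
      have : G x ^ α < 1 := Real.rpow_lt_one h.1.le h.2 hα
      linarith
    have hkey : ∀ x ∈ Set.Ioi (0:ℝ), α * G x ^ (α - 1) * g x = B * (1 - G x ^ α) := by
      intro x hx
      have hx0 : (0:ℝ) < x := hx
      have hr := hRAI x hx0
      rw [genRAI, if_neg hαne] at hr
      rw [div_eq_iff (hden x hx).ne'] at hr
      have : x * (α * G x ^ (α - 1) * g x) = x * (B * (1 - G x ^ α)) := by
        linarith [hr]
      exact mul_left_cancel₀ hx0.ne' (by linarith [this])
    have hHder : ∀ x ∈ Set.Ioi (0:ℝ), HasDerivAt H 0 x := by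
      intro x hx
      have hG := hG01 x hx
      have hGα : HasDerivAt (fun y => G y ^ α) (g x * α * G x ^ (α - 1)) x :=
        (hGder x hx).rpow_const (Or.inl hG.1.ne')
      have h1m : HasDerivAt (fun y => 1 - G y ^ α) (-(g x * α * G x ^ (α - 1))) x :=
        hGα.const_sub 1
      have hlog : HasDerivAt (fun y => Real.log (1 - G y ^ α))
          (-(g x * α * G x ^ (α - 1)) / (1 - G x ^ α)) x := h1m.log (hden x hx).ne'
      have hBx : HasDerivAt (fun y : ℝ => B * y) B x := by
        simpa using (hasDerivAt_id x).const_mul B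
      have hsum := hlog.add hBx
      have heq : -(g x * α * G x ^ (α - 1)) / (1 - G x ^ α) + B = 0 := by
        have hk := hkey x hx
        rw [div_add' _ _ _ (hden x hx).ne', div_eq_zero_iff]
        left
        nlinarith [hk]
      rw [heq] at hsum
      exact hsum
    -- H constant on Ioi 0
    have hconst : ∀ u v : ℝ, 0 < u → u < v → H u = H v := by
      intro u v hu huv
      have hc : ContinuousOn H (Set.Icc u v) := by
        intro y hy
        exact (hHder y (lt_of_lt_of_le hu hy.1)).continuousAt.continuousWithinAt
      obtain ⟨c, hc1, hc2⟩ := exists_hasDerivAt_eq_slope H (fun _ => 0) huv hc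
        (fun y hy => hHder y (lt_trans hu hy.1))
      have h0 : (0:ℝ) = (H v - H u) / (v - u) := hc2
      rw [eq_comm, div_eq_zero_iff] at h0
      rcases h0 with h | h
      · linarith
      · exfalso; exact (sub_ne_zero.2 huv.ne') h
    -- limit of H at 0+
    have hHlim : Filter.Tendsto H (nhdsWithin (0:ℝ) (Set.Ioi 0)) (nhds 0) := by
      have h1 : Filter.Tendsto (fun y => G y ^ α) (nhdsWithin (0:ℝ) (Set.Ioi 0)) (nhds 0) := by
        have h2 : ContinuousAt (fun t : ℝ => t ^ α) 0 :=
          Real.continuousAt_rpow_const 0 α (Or.inr hα.le)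
        have := h2.tendsto.comp hG0
        simpa [Function.comp_def, Real.zero_rpow hαne] using this
      have h3 : Filter.Tendsto (fun y => Real.log (1 - G y ^ α))
          (nhdsWithin (0:ℝ) (Set.Ioi 0)) (nhds 0) := by
        have h4 : Filter.Tendsto (fun y => 1 - G y ^ α)
            (nhdsWithin (0:ℝ) (Set.Ioi 0)) (nhds 1) := by
          have := h1.const_sub 1
          simpa using this
        have h5 : ContinuousAt Real.log 1 := Real.continuousAt_log one_ne_zero
        have := h5.tendsto.comp h4
        simpa [Function.comp_def] using this
      have h6 : Filter.Tendsto (fun y : ℝ => B * y)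
          (nhdsWithin (0:ℝ) (Set.Ioi 0)) (nhds 0) := by
        have : Continuous (fun y : ℝ => B * y) := by continuity
        have h := this.tendsto 0
        simp only [mul_zero] at h
        exact h.mono_left nhdsWithin_le_nhds
      have := h3.add h6
      simpa [hH] using this
    -- H is eventually constant H 1 near 0+, so H 1 = 0
    have hH10 : ∀ x > (0:ℝ), H x = 0 := by
      intro x hx
      have hconst' : ∀ y : ℝ, 0 < y → H y = H x := by
        intro y hy
        rcases lt_trichotomy y x with h | h | h
        · exact hconst y x hy h
        · rw [h]
        · exact (hconst x y hx h).symm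
      have hev : H =ᶠ[nhdsWithin (0:ℝ) (Set.Ioi 0)] fun _ => H x := by
        filter_upwards [self_mem_nhdsWithin] with y hy
        exact hconst' y hy
      have h2 : Filter.Tendsto H (nhdsWithin (0:ℝ) (Set.Ioi 0)) (nhds (H x)) :=
        Filter.Tendsto.congr' hev.symm tendsto_const_nhds
      exact tendsto_nhds_unique h2 hHlim
    intro x hx
    have hG := hG01 x hx
    have hHx := hH10 x hx
    have hlog : Real.log (1 - G x ^ α) = -(B * x) := by
      have hHx' : Real.log (1 - G x ^ α) + B * x = 0 := hHx
      linarith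
    have hexp : 1 - G x ^ α = Real.exp (-(B * x)) := by
      rw [← Real.exp_log (hden x hx), hlog]
    have hGα : G x ^ α = 1 - Real.exp (-(B * x)) := by linarith
    have : (G x ^ α) ^ (1/α) = G x := by
      rw [← Real.rpow_mul hG.1.le, mul_one_div_cancel hαne, Real.rpow_one]
    rw [← this, hGα, Fee]
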